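/- Let a < b be real numbers, D > 0, f : ℝ → ℝ continuously differentiable on [a, b], and suppose v : ℝ → ℝ is twice continuously differentiable on [a, b], satisfies v(a) = v(b) = 0, v(x) ≥ 0 for all x ∈ [a, b], ∫ₐᵇ v(x) dx > 0, and γ v(x) = (D v'(x) − f(x) v(x))' for all x ∈ [a, b]. Then γ ≤ 0. -/

import Mathlib

open Set intervalIntegral Topology Filter

lemma fp_slope_left (a b : ℝ) (hab : a < b) (v : ℝ → ℝ) (d : ℝ)
    (hd : HasDerivWithinAt v d (Set.Icc a b) a) (hva : v a = 0)
    (hpos : ∀ x ∈ Set.Icc a b, 0 ≤ v x) : 0 ≤ d := by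
  rw [hasDerivWithinAt_iff_tendsto_slope, Set.Icc_diff_left] at hd
  have : Filter.NeBot (𝓝[Set.Ioc a b] a) := left_nhdsWithin_Ioc_neBot hab
  refine le_of_tendsto_of_tendsto tendsto_const_nhds hd ?_
  filter_upwards [self_mem_nhdsWithin] with y hy
  have h1 : 0 < y - a := by linarith [hy.1]
  have h2 : 0 ≤ v y := hpos y ⟨hy.1.le, hy.2⟩
  have : slope v a y = v y / (y - a) := by simp [slope_def_field, hva]
  rw [this]
  positivity

lemma fp_slope_right (a b : ℝ) (hab : a < b) (v : ℝ → ℝ) (d : ℝ)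
    (hd : HasDerivWithinAt v d (Set.Icc a b) b) (hvb : v b = 0)
    (hpos : ∀ x ∈ Set.Icc a b, 0 ≤ v x) : d ≤ 0 := by
  rw [hasDerivWithinAt_iff_tendsto_slope, Set.Icc_sdiff_right] at hd
  have : Filter.NeBot (𝓝[Set.Ico a b] b) := right_nhdsWithin_Ico_neBot hab
  refine le_of_tendsto_of_tendsto hd tendsto_const_nhds ?_
  filter_upwards [self_mem_nhdsWithin] with y hy
  have h1 : y - b < 0 := by linarith [hy.2]
  have h2 : 0 ≤ v y := hpos y ⟨hy.1, hy.2.le⟩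
  have : slope v b y = v y / (y - b) := by
    simp [slope_def_field, hvb]
  rw [this]
  exact div_nonpos_of_nonneg_of_nonpos h2 h1.le

/-- A nonnegative Dirichlet eigenfunction of the Fokker-Planck operator on
`[a, b]` with positive total mass has eigenvalue `γ ≤ 0`. -/
theorem fokker_planck_leading_eigenvalue_nonpos
    (a b D γ : ℝ) (hab : a < b) (hD : 0 < D)
    (f v : ℝ → ℝ)
    (hf : ContDiffOn ℝ 1 f (Set.Icc a b))
    (hv : ContDiffOn ℝ 2 v (Set.Icc a b))
    (hva : v a = 0) (hvb : v b = 0)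
    (hpos : ∀ x ∈ Set.Icc a b, 0 ≤ v x)
    (hmass : 0 < ∫ x in a..b, v x)
    (heig : ∀ x ∈ Set.Icc a b,
      γ * v x = deriv (fun y => D * deriv v y - f y * v y) x) :
    γ ≤ 0 := by
  have hu : UniqueDiffOn ℝ (Set.Icc a b) := uniqueDiffOn_Icc hab
  set w : ℝ → ℝ := derivWithin v (Set.Icc a b) with hw
  have hw1 : ContDiffOn ℝ 1 w (Set.Icc a b) := hv.derivWithin hu (by norm_num)
  have hvdiff : DifferentiableOn ℝ v (Set.Icc a b) := hv.differentiableOn (by norm_num)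
  have hwdiff : DifferentiableOn ℝ w (Set.Icc a b) := hw1.differentiableOn one_ne_zero
  have hfdiff : DifferentiableOn ℝ f (Set.Icc a b) := hf.differentiableOn one_ne_zero
  set G : ℝ → ℝ := fun y => D * w y - f y * v y with hG
  have hGcont : ContinuousOn G (Set.Icc a b) := by
    exact ((continuousOn_const.mul hw1.continuousOn).sub
      (hf.continuousOn.mul hv.continuousOn))
  -- On the interior, G has derivative γ * v x
  have hGderiv : ∀ x ∈ Set.Ioo a b, HasDerivAt G (γ * v x) x := by
    intro x hx
    have hmem : Set.Icc a b ∈ 𝓝 x := Icc_mem_nhds hx.1 hx.2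
    have hoo : Set.Ioo a b ∈ 𝓝 x := (isOpen_Ioo).mem_nhds hx
    have hweq : ∀ y ∈ Set.Ioo a b, w y = deriv v y := by
      intro y hy
      exact derivWithin_of_mem_nhds (Icc_mem_nhds hy.1 hy.2)
    have hGg : G =ᶠ[𝓝 x] (fun y => D * deriv v y - f y * v y) := by
      filter_upwards [hoo] with y hy
      simp [hG, hweq y hy]
    -- differentiability of g at x
    have hdv : DifferentiableAt ℝ (deriv v) x := by
      have h1 : DifferentiableAt ℝ w x :=
        (hwdiff x (Set.Ioo_subset_Icc_self hx)).differentiableAt hmem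
      refine h1.congr_of_eventuallyEq ?_
      filter_upwards [hoo] with y hy
      exact (hweq y hy).symm
    have hdf : DifferentiableAt ℝ f x :=
      (hfdiff x (Set.Ioo_subset_Icc_self hx)).differentiableAt hmem
    have hdv0 : DifferentiableAt ℝ v x :=
      (hvdiff x (Set.Ioo_subset_Icc_self hx)).differentiableAt hmem
    have hdg : DifferentiableAt ℝ (fun y => D * deriv v y - f y * v y) x :=
      ((differentiableAt_const D).mul hdv).sub (hdf.mul hdv0)
    have hgd : HasDerivAt (fun y => D * deriv v y - f y * v y) (γ * v x) x := by
      have := hdg.hasDerivAt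
      rwa [← heig x (Set.Ioo_subset_Icc_self hx)] at this
    exact hgd.congr_of_eventuallyEq hGg
  have hint : IntervalIntegrable (fun x => γ * v x) MeasureTheory.volume a b := by
    apply ContinuousOn.intervalIntegrable
    apply (continuousOn_const.mul hv.continuousOn).mono
    rw [Set.uIcc_of_le hab.le]
  have hFTC : (∫ y in a..b, γ * v y) = G b - G a :=
    intervalIntegral.integral_eq_sub_of_hasDerivAt_of_le hab.le hGcont hGderiv hint
  have hGb : G b = D * w b := by simp [hG, hvb]
  have hGa : G a = D * w a := by simp [hG, hva]
  have hwa : 0 ≤ w a := by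
    refine fp_slope_left a b hab v (w a) ?_ hva hpos
    exact (hvdiff a (Set.left_mem_Icc.2 hab.le)).hasDerivWithinAt
  have hwb : w b ≤ 0 := by
    refine fp_slope_right a b hab v (w b) ?_ hvb hpos
    exact (hvdiff b (Set.right_mem_Icc.2 hab.le)).hasDerivWithinAt
  have hmul : γ * ∫ x in a..b, v x ≤ 0 := by
    rw [← intervalIntegral.integral_const_mul, hFTC, hGb, hGa]
    nlinarith
  nlinarith
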